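/- In a planar embedded graph whose regions are defined by a nested family of simple cycles organized in a region tree, an edge e with adjacent faces f1 and f2 is an internal edge of region R (i.e., both faces adjacent to e are enclosed by R's bounding cycle but not by any child's bounding cycle) if and only if R is the lowest common ancestor of f1 and f2 in the region tree. -/
import Mathlib


/-- Region-tree characterization of internal edges.  Regions are given by the sets
`encl R` of faces enclosed by their bounding cycles; the family is nested (laminar).
An edge `e` with adjacent faces `f₁`, `f₂` is an internal edge of region `R`
(both adjacent faces are enclosed by `R`'s bounding cycle, but not both by the
bounding cycle of any region strictly enclosed in `R`) if and only if `R` is the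
lowest common ancestor of `f₁` and `f₂` in the region tree (i.e. `R` encloses both
faces and every region enclosing both faces encloses `R`). -/
theorem internal_edge_iff_lca {Face Region : Type*}
    (encl : Region → Set Face)
    (hnested : ∀ R R' : Region,
      encl R ⊆ encl R' ∨ encl R' ⊆ encl R ∨ Disjoint (encl R) (encl R'))
    (f₁ f₂ : Face) (R : Region) :
    (f₁ ∈ encl R ∧ f₂ ∈ encl R ∧
        ∀ R' : Region, encl R' ⊂ encl R → ¬(f₁ ∈ encl R' ∧ f₂ ∈ encl R'))
      ↔
    (f₁ ∈ encl R ∧ f₂ ∈ encl R ∧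
        ∀ R' : Region, f₁ ∈ encl R' → f₂ ∈ encl R' → encl R ⊆ encl R') := by
  constructor
  · rintro ⟨h1, h2, h3⟩
    refine ⟨h1, h2, fun R' hf1 hf2 => ?_⟩
    rcases hnested R R' with h | h | h
    · exact h
    · rcases eq_or_ssubset_of_subset h with he | hs
      · exact he.ge
      · exact absurd ⟨hf1, hf2⟩ (h3 R' hs)
    · exact absurd hf1 (Set.disjoint_left.mp h h1)
  · rintro ⟨h1, h2, h3⟩
    refine ⟨h1, h2, fun R' hs ⟨hf1, hf2⟩ => hs.not_subset (h3 R' hf1 hf2)⟩
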